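/- arXiv:2404.00041 — 3 statements merged into one kernel-verified Lean document; each statement's English description precedes it below -/
import Mathlib

section
/- Let F(s, λ) := (1/λ)(s - ∑_{j=0}^{s-1} e^{-λ} λ^j / j!) for an integer s ≥ 1 and real λ ∈ (0, s+1]. Then for every integer k ≥ 1, F(k, k+1) ≥ F(1, 2) = (1 - e^{-2})/2. -/
open Real Finset

theorem F_k_succ_ge (k : ℕ) (hk : 1 ≤ k) :
    let F : ℕ → ℝ → ℝ := fun s lam =>
      (1 / lam) * (s - ∑ j ∈ Finset.range s, Real.exp (-lam) * lam ^ j / Nat.factorial j)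
    F k (k + 1) ≥ F 1 2 ∧ F 1 2 = (1 - Real.exp (-2)) / 2 := by
  intro F
  have hexp2 : (0:ℝ) < Real.exp (-2) := Real.exp_pos _
  have hF1 : F 1 2 = (1 - Real.exp (-2)) / 2 := by
    simp [F, Finset.sum_range_one]
    ring
  refine ⟨?_, hF1⟩
  rw [hF1]
  rcases Nat.lt_or_ge k 3 with h | h
  · have he3 : Real.exp (-3) ≤ 1/8 := by
      rw [Real.exp_neg, inv_le_comm₀ (Real.exp_pos _) (by norm_num)]
      have h2 : (2:ℝ) ≤ Real.exp 1 := by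
        nlinarith [Real.add_one_le_exp (1:ℝ)]
      calc (1/8 : ℝ)⁻¹ = 2^3 := by norm_num
        _ ≤ Real.exp 1 ^ 3 := pow_le_pow_left₀ (by norm_num) h2 3
        _ = Real.exp 3 := by rw [← Real.exp_nat_mul]; norm_num
    interval_cases k
    · simp only [F, Nat.cast_one, Finset.sum_range_one]
      norm_num
      linarith
    · simp only [F, Nat.cast_ofNat, Finset.sum_range_succ, Finset.sum_range_one]
      norm_num
      nlinarith
  · set lam : ℝ := (k:ℝ) + 1 with hlamdef
    have hlampos : (0:ℝ) < lam := by positivity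
    have hk3 : (3:ℝ) ≤ (k:ℝ) := by exact_mod_cast h
    have hsum : ∑ j ∈ Finset.range k, Real.exp (-lam) * lam ^ j / (Nat.factorial j) ≤ 1 := by
      have h1 : ∑ j ∈ Finset.range k, lam ^ j / (Nat.factorial j) ≤ Real.exp lam :=
        Real.sum_le_exp_of_nonneg hlampos.le k
      have heq : ∑ j ∈ Finset.range k, Real.exp (-lam) * lam ^ j / (Nat.factorial j)
          = Real.exp (-lam) * ∑ j ∈ Finset.range k, lam ^ j / (Nat.factorial j) := by
        rw [Finset.mul_sum]
        refine Finset.sum_congr rfl fun j _ => by ring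
      rw [heq]
      calc Real.exp (-lam) * ∑ j ∈ Finset.range k, lam ^ j / (Nat.factorial j)
          ≤ Real.exp (-lam) * Real.exp lam :=
            mul_le_mul_of_nonneg_left h1 (Real.exp_pos _).le
        _ = 1 := by rw [← Real.exp_add]; norm_num
    show (1 - Real.exp (-2)) / 2 ≤ 1 / lam * ((k:ℝ) - ∑ j ∈ Finset.range k,
      Real.exp (-lam) * lam ^ j / (Nat.factorial j))
    rw [one_div_mul_eq_div, le_div_iff₀ hlampos]
    nlinarith [mul_pos hlampos hexp2]
end

section
/- Let F(s, λ) := (1/λ)(s - ∑_{j=0}^{s-1} e^{-λ} λ^j / j!) for an integer s ≥ 1 and real λ ∈ (0, s+1]. Then for fixed s, the function λ ↦ F(s, λ) is monotonically decreasing on (0, s+1]. -/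
open Real Finset

lemma poisson_sum_hasDerivAt (n : ℕ) (lam : ℝ) :
    HasDerivAt (fun x : ℝ => ∑ j ∈ Finset.range (n + 1),
        Real.exp (-x) * x ^ j / Nat.factorial j)
      (-(Real.exp (-lam) * lam ^ n / Nat.factorial n)) lam := by
  induction n with
  | zero =>
    have h : HasDerivAt (fun x : ℝ => Real.exp (-x)) (Real.exp (-lam) * (-1)) lam :=
      (hasDerivAt_neg lam).exp
    have heq : (fun x : ℝ => ∑ j ∈ Finset.range 1,
        Real.exp (-x) * x ^ j / Nat.factorial j) = fun x : ℝ => Real.exp (-x) := by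
      ext x; simp
    rw [heq]
    convert h using 1; simp
  | succ n ih =>
    have hterm : HasDerivAt (fun x : ℝ => Real.exp (-x) * x ^ (n + 1) / Nat.factorial (n + 1))
        ((Real.exp (-lam) * (-1) * lam ^ (n + 1) +
          Real.exp (-lam) * ((n + 1 : ℕ) * lam ^ n)) / Nat.factorial (n + 1)) lam := by
      exact (((hasDerivAt_neg lam).exp.mul (hasDerivAt_pow (n + 1) lam)).div_const _)
    have heq : (fun x : ℝ => ∑ j ∈ Finset.range (n + 2),
        Real.exp (-x) * x ^ j / Nat.factorial j)
        = fun x : ℝ => (∑ j ∈ Finset.range (n + 1),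
          Real.exp (-x) * x ^ j / Nat.factorial j)
          + Real.exp (-x) * x ^ (n + 1) / Nat.factorial (n + 1) := by
      ext x; rw [Finset.sum_range_succ]
    rw [heq]
    convert ih.add hterm using 1
    case e'_4 => rfl
    case e'_5 => rfl
    case e'_8 => rfl
    have hn : (Nat.factorial n : ℝ) ≠ 0 := Nat.cast_ne_zero.mpr (Nat.factorial_ne_zero n)
    have hn1 : (Nat.factorial (n + 1) : ℝ) ≠ 0 := Nat.cast_ne_zero.mpr (Nat.factorial_ne_zero _)
    have hfac : (Nat.factorial (n + 1) : ℝ) = (n + 1) * Nat.factorial n := by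
      rw [Nat.factorial_succ]; push_cast; ring
    rw [hfac]
    field_simp
    push_cast
    ring

theorem F_antitone_in_lambda (s : ℕ) (hs : 1 ≤ s) :
    AntitoneOn
      (fun lam : ℝ =>
        (1 / lam) * (s - ∑ j ∈ Finset.range s, Real.exp (-lam) * lam ^ j / Nat.factorial j))
      (Set.Ioc (0 : ℝ) (s + 1)) := by
  obtain ⟨t, rfl⟩ : ∃ t, s = t + 1 := ⟨s - 1, by omega⟩
  set f : ℝ → ℝ := fun lam =>
    (1 / lam) * ((t + 1 : ℕ) - ∑ j ∈ Finset.range (t + 1),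
      Real.exp (-lam) * lam ^ j / Nat.factorial j) with hf
  have hderiv : ∀ lam : ℝ, 0 < lam → HasDerivAt f
      (-(lam ^ 2)⁻¹ * ((t + 1 : ℕ) - ∑ j ∈ Finset.range (t + 1),
          Real.exp (-lam) * lam ^ j / Nat.factorial j)
        + (1 / lam) * (Real.exp (-lam) * lam ^ t / Nat.factorial t)) lam := by
    intro lam hlam
    have hinv : HasDerivAt (fun x : ℝ => 1 / x) (-(lam ^ 2)⁻¹) lam := by
      simpa [one_div] using hasDerivAt_inv hlam.ne'
    have hg : HasDerivAt (fun x : ℝ => ((t + 1 : ℕ) : ℝ) - ∑ j ∈ Finset.range (t + 1),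
        Real.exp (-x) * x ^ j / Nat.factorial j)
        (Real.exp (-lam) * lam ^ t / Nat.factorial t) lam := by
      have := (poisson_sum_hasDerivAt t lam).const_sub ((t + 1 : ℕ) : ℝ)
      simpa using this
    exact hinv.mul hg
  have key : ∀ lam : ℝ, 0 < lam →
      -(lam ^ 2)⁻¹ * ((t + 1 : ℕ) - ∑ j ∈ Finset.range (t + 1),
          Real.exp (-lam) * lam ^ j / Nat.factorial j)
        + (1 / lam) * (Real.exp (-lam) * lam ^ t / Nat.factorial t) ≤ 0 := by
    intro lam hlam
    set S : ℝ := ∑ j ∈ Finset.range (t + 1), Real.exp (-lam) * lam ^ j / Nat.factorial j with hS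
    have hSnn : 0 ≤ S := by
      apply Finset.sum_nonneg
      intro j _
      positivity
    have hfull : S + Real.exp (-lam) * lam ^ (t + 1) / Nat.factorial (t + 1) ≤ 1 := by
      have h1 : S + Real.exp (-lam) * lam ^ (t + 1) / Nat.factorial (t + 1)
          = Real.exp (-lam) * ∑ j ∈ Finset.range (t + 2), lam ^ j / Nat.factorial j := by
        rw [hS, ← Finset.sum_range_succ, Finset.mul_sum]
        congr 1 with j
        ring
      rw [h1]
      have h2 : ∑ j ∈ Finset.range (t + 2), lam ^ j / Nat.factorial j ≤ Real.exp lam :=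
        Real.sum_le_exp_of_nonneg hlam.le (t + 2)
      calc Real.exp (-lam) * ∑ j ∈ Finset.range (t + 2), lam ^ j / Nat.factorial j
          ≤ Real.exp (-lam) * Real.exp lam :=
            mul_le_mul_of_nonneg_left h2 (Real.exp_pos _).le
        _ = 1 := by rw [← Real.exp_add]; simp
    -- lam * u_{t} = (t+1) * u_{t+1}
    have hrw : lam * (Real.exp (-lam) * lam ^ t / Nat.factorial t)
        = ((t + 1 : ℕ) : ℝ) * (Real.exp (-lam) * lam ^ (t + 1) / Nat.factorial (t + 1)) := by
      have hn : (Nat.factorial t : ℝ) ≠ 0 := Nat.cast_ne_zero.mpr (Nat.factorial_ne_zero t)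
      have hfac : (Nat.factorial (t + 1) : ℝ) = (t + 1) * Nat.factorial t := by
        rw [Nat.factorial_succ]; push_cast; ring
      rw [hfac]
      push_cast
      field_simp
      ring
    have hut : 0 ≤ Real.exp (-lam) * lam ^ (t + 1) / Nat.factorial (t + 1) := by positivity
    have hts : (1 : ℝ) ≤ ((t + 1 : ℕ) : ℝ) := by push_cast; linarith [show (0:ℝ) ≤ t from Nat.cast_nonneg t]
    have hmain : S + lam * (Real.exp (-lam) * lam ^ t / Nat.factorial t) ≤ ((t + 1 : ℕ) : ℝ) := by
      rw [hrw]
      calc S + ((t + 1 : ℕ) : ℝ) * (Real.exp (-lam) * lam ^ (t + 1) / Nat.factorial (t + 1))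
          ≤ ((t + 1 : ℕ) : ℝ) * S
            + ((t + 1 : ℕ) : ℝ) * (Real.exp (-lam) * lam ^ (t + 1) / Nat.factorial (t + 1)) := by
            nlinarith
        _ = ((t + 1 : ℕ) : ℝ) * (S + Real.exp (-lam) * lam ^ (t + 1) / Nat.factorial (t + 1)) := by
            ring
        _ ≤ ((t + 1 : ℕ) : ℝ) * 1 := by
            apply mul_le_mul_of_nonneg_left hfull (by linarith)
        _ = ((t + 1 : ℕ) : ℝ) := by ring
    have hlam2 : (0 : ℝ) < lam ^ 2 := by positivity
    have : -(lam ^ 2)⁻¹ * (((t + 1 : ℕ) : ℝ) - S)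
        + (1 / lam) * (Real.exp (-lam) * lam ^ t / Nat.factorial t)
        = (1 / lam ^ 2) * (S + lam * (Real.exp (-lam) * lam ^ t / Nat.factorial t)
            - ((t + 1 : ℕ) : ℝ)) := by
      field_simp
      ring
    rw [this]
    apply mul_nonpos_of_nonneg_of_nonpos
    · positivity
    · linarith
  apply antitoneOn_of_deriv_nonpos (convex_Ioc (0 : ℝ) ((t + 1 : ℕ) + 1))
  · intro x hx
    exact (hderiv x hx.1).continuousAt.continuousWithinAt
  · rw [interior_Ioc]
    intro x hx
    exact (hderiv x hx.1).differentiableAt.differentiableWithinAt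
  · rw [interior_Ioc]
    intro x hx
    rw [(hderiv x hx.1).deriv]
    exact key x hx.1
end

section
/- Let a ∈ (1/(k+1), 1/k]^n be a vector of n item sizes for an integer k ≥ 1, and suppose x ∈ [0,1]^n satisfies ∑_i a_i x_i ≤ 1. If x_i = 1 for at least k indices i, then x_i = 1 for exactly k indices, and for any two indices i ≠ j with x_i < 1 and x_j < 1 we have x_i + x_j < 1. -/
open Finset

theorem class_k_ones_count (n k : ℕ) (hk : 1 ≤ k) (a x : Fin n → ℝ)
    (ha : ∀ i, a i ∈ Set.Ioc (1 / ((k : ℝ) + 1)) (1 / (k : ℝ)))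
    (hx : ∀ i, x i ∈ Set.Icc (0 : ℝ) 1)
    (hfeas : ∑ i, a i * x i ≤ 1)
    (hmany : k ≤ {i | x i = 1}.ncard) :
    {i | x i = 1}.ncard = k ∧
      ∀ i j, i ≠ j → x i < 1 → x j < 1 → x i + x j < 1 := by
  classical
  set S : Finset (Fin n) := Finset.univ.filter (fun i => x i = 1) with hS
  have hset : {i | x i = 1} = ↑S := by ext i; simp [hS]
  rw [hset, Set.ncard_coe_finset] at hmany ⊢
  have hkpos : (0:ℝ) < (k:ℝ) + 1 := by positivity
  have ha0 : ∀ i, 0 ≤ a i := fun i =>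
    le_of_lt (lt_of_le_of_lt (by positivity) (ha i).1)
  have hnonneg : ∀ i, 0 ≤ a i * x i := fun i => mul_nonneg (ha0 i) (hx i).1
  have hSne : S.Nonempty := by
    rw [← Finset.card_pos]; omega
  -- strict lower bound on the sum over any nonempty T ⊆ S
  have hSsum : ∀ T : Finset (Fin n), T ⊆ S → T.Nonempty →
      (T.card : ℝ) / ((k:ℝ)+1) < ∑ i ∈ T, a i * x i := by
    intro T hT hTne
    have : ∑ i ∈ T, 1/((k:ℝ)+1) < ∑ i ∈ T, a i * x i := by
      refine Finset.sum_lt_sum_of_nonempty hTne (fun i hi => ?_)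
      have hx1 : x i = 1 := by have := hT hi; simp [hS] at this; exact this
      rw [hx1, mul_one]; exact (ha i).1
    calc (T.card : ℝ) / ((k:ℝ)+1) = ∑ i ∈ T, 1/((k:ℝ)+1) := by
          rw [Finset.sum_const, nsmul_eq_mul]; ring
      _ < _ := this
  have hsub : ∀ T : Finset (Fin n), ∑ i ∈ T, a i * x i ≤ 1 := by
    intro T
    calc ∑ i ∈ T, a i * x i ≤ ∑ i, a i * x i :=
          Finset.sum_le_sum_of_subset_of_nonneg (Finset.subset_univ T)
            (fun i _ _ => hnonneg i)
      _ ≤ 1 := hfeas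
  have hcard : S.card = k := by
    by_contra h
    have hgt : k + 1 ≤ S.card := by omega
    have h1 : (S.card : ℝ) / ((k:ℝ)+1) < 1 :=
      lt_of_lt_of_le (hSsum S le_rfl hSne) (hsub S)
    rw [div_lt_one hkpos] at h1
    have : ((k:ℝ)+1) ≤ (S.card : ℝ) := by exact_mod_cast hgt
    linarith
  refine ⟨hcard, fun i j hij hxi hxj => ?_⟩
  by_contra hcon
  push_neg at hcon
  have hiS : i ∉ S := by simp [hS]; linarith
  have hjS : j ∉ S := by simp [hS]; linarith
  have hterm : ∀ l, x l / ((k:ℝ)+1) ≤ a l * x l := by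
    intro l
    rw [div_eq_mul_inv, mul_comm]
    exact mul_le_mul_of_nonneg_right
      (le_of_lt (by rw [← one_div]; exact (ha l).1)) (hx l).1
  have hsplit : ∑ l ∈ insert i (insert j S), a l * x l
      = a i * x i + a j * x j + ∑ l ∈ S, a l * x l := by
    rw [Finset.sum_insert (by simp [hiS, hij]), Finset.sum_insert hjS]
    ring
  have h1 : (k:ℝ) / ((k:ℝ)+1) < ∑ l ∈ S, a l * x l := by
    have := hSsum S le_rfl hSne
    rwa [hcard] at this
  have h2 : 1 / ((k:ℝ)+1) ≤ a i * x i + a j * x j := by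
    have hi := hterm i
    have hj := hterm j
    have : (x i + x j) / ((k:ℝ)+1) ≤ a i * x i + a j * x j := by
      rw [add_div]; linarith
    refine le_trans ?_ this
    gcongr

  have hbig : (1:ℝ) < ∑ l ∈ insert i (insert j S), a l * x l := by
    rw [hsplit]
    have : (1:ℝ) = (k:ℝ)/((k:ℝ)+1) + 1/((k:ℝ)+1) := by field_simp
    linarith
  exact absurd (hsub _) (not_le.mpr hbig)
end
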